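/- arXiv:1910.14060 — 2 statements merged into one kernel-verified Lean document; each statement's English description precedes it below -/
import Mathlib

section
/- Let V and W be sheaves of rank r ≥ 1 on a smooth projective surface X containing a smooth rational curve E with E² = −1, such that V|_E ≅ O_E^{⊕r}. Let 0 ≤ d < r and n ∈ ℤ. If W fits in an exact sequence 0 → W(nE) → V((n+1)E) → O_E(−n−1)^{⊕d} → 0 or 0 → V((n−1)E) → W(nE) → O_E(−n)^{⊕d} → 0, then Δ(W) = Δ(V) + d(r−d)/(2r²). In particular Δ(W) ≤ Δ(V) + 1/8. -/
/-- Numerical data of a smooth projective surface: the rational Néron–Severi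
space `V` with its intersection pairing, the canonical class, and `χ(O_X)`. -/
structure NumSurface (V : Type*) [AddCommGroup V] [Module ℚ V] where
  inter : V →ₗ[ℚ] V →ₗ[ℚ] ℚ
  inter_symm : ∀ x y, inter x y = inter y x
  K : V
  chiO : ℚ

/-- The Chern character `(ch₀, ch₁, ch₂)` of a coherent sheaf. -/
structure CharQ (V : Type*) where
  r : ℚ
  c1 : V
  ch2 : ℚ

variable {V : Type*} [AddCommGroup V] [Module ℚ V]

instance : Add (CharQ V) := ⟨fun a b => ⟨a.r + b.r, a.c1 + b.c1, a.ch2 + b.ch2⟩⟩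
instance : Sub (CharQ V) := ⟨fun a b => ⟨a.r - b.r, a.c1 - b.c1, a.ch2 - b.ch2⟩⟩
instance : SMul ℚ (CharQ V) := ⟨fun q a => ⟨q * a.r, q • a.c1, q * a.ch2⟩⟩

namespace CharQ

/-- The total slope `ν = ch₁/ch₀`. -/
def nu (v : CharQ V) : V := v.r⁻¹ • v.c1

/-- The discriminant `Δ = ν²/2 − ch₂/ch₀`. -/
def Delta (S : NumSurface V) (v : CharQ V) : ℚ :=
  S.inter (nu v) (nu v) / 2 - v.ch2 / v.r

/-- The Chern character of the twist `G(A)` for a divisor class `A`: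
`ch(G)·e^A`. -/
def twist (S : NumSurface V) (v : CharQ V) (A : V) : CharQ V :=
  ⟨v.r, v.c1 + v.r • A, v.ch2 + S.inter v.c1 A + v.r * S.inter A A / 2⟩

/-- The Chern character of `i_* O_E(m)` for a (−1)-curve `E ⊂ X`:
`(0, E, m + 1/2)`; in particular `ch(O_E(−1)) = (0, E, −1/2)`, coming from
`0 → O → O(E) → O_E(−1) → 0`. -/
def OE (Ec : V) (m : ℤ) : CharQ V := ⟨0, Ec, (m : ℚ) + 1 / 2⟩

end CharQ

open CharQ in
lemma key (S : NumSurface V) (Vc W : CharQ V) (r d : ℚ) (hr : r ≠ 0)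
    (Ec : V) (hE : S.inter Ec Ec = -1) (ha : S.inter Vc.c1 Ec = 0)
    (hVr : Vc.r = r) (hWr : W.r = r) (c : ℚ) (hc : c ^ 2 = (r - d) ^ 2)
    (hc1 : W.c1 = Vc.c1 + c • Ec) (hch2 : W.ch2 = Vc.ch2 - (r - d) / 2) :
    Delta S W = Delta S Vc + d * (r - d) / (2 * r ^ 2) := by
  unfold Delta nu
  rw [hVr, hWr, hc1, hch2]
  simp only [map_add, map_smul, LinearMap.add_apply, LinearMap.smul_apply, smul_eq_mul,
    hE, ha, S.inter_symm Ec Vc.c1]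
  field_simp
  linear_combination (-1 : ℚ) * hc

open CharQ in
/-- Let `V` and `W` be sheaves of rank `r ≥ 1` on a smooth projective surface
containing a smooth rational curve `E` with `E² = −1`, with `V|_E ≅ O_E^{⊕r}`
(numerically, `c₁(V).E = 0`).  Let `0 ≤ d < r` and `n ∈ ℤ`.  If `W` fits in
an exact sequence `0 → W(nE) → V((n+1)E) → O_E(−n−1)^{⊕d} → 0` or
`0 → V((n−1)E) → W(nE) → O_E(−n)^{⊕d} → 0` (so that the Chern characters
are additive along it), then `Δ(W) = Δ(V) + d(r−d)/(2r²)`.  In particular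
`Δ(W) ≤ Δ(V) + 1/8`. -/
theorem discriminant_of_elementary_transformation
    (S : NumSurface V) (r d : ℕ) (hr : 1 ≤ r) (hd0 : 0 ≤ d) (hdr : d < r)
    (n : ℤ) (Ec : V) (hE : S.inter Ec Ec = -1)
    (Vch Wch : CharQ V) (hVr : Vch.r = r) (hWr : Wch.r = r)
    (hVrestr : S.inter Vch.c1 Ec = 0)
    (hseq :
      twist S Vch (((n : ℚ) + 1) • Ec)
          = twist S Wch ((n : ℚ) • Ec) + (d : ℚ) • OE Ec (-n - 1) ∨
      twist S Wch ((n : ℚ) • Ec)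
          = twist S Vch (((n : ℚ) - 1) • Ec) + (d : ℚ) • OE Ec (-n)) :
    Delta S Wch = Delta S Vch + (d * (r - d) : ℚ) / (2 * (r : ℚ) ^ 2) ∧
      Delta S Wch ≤ Delta S Vch + 1 / 8 := by
  have hrQ : (r : ℚ) ≠ 0 := by positivity
  have hmain : Delta S Wch = Delta S Vch + (d * (r - d) : ℚ) / (2 * (r : ℚ) ^ 2) := by
    rcases hseq with h | h
    · have hc1 : Vch.c1 + Vch.r • (((n : ℚ) + 1) • Ec)
          = (Wch.c1 + Wch.r • ((n : ℚ) • Ec)) + (d : ℚ) • Ec := congrArg CharQ.c1 h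
      have hch2 : Vch.ch2 + S.inter Vch.c1 (((n : ℚ) + 1) • Ec)
            + Vch.r * S.inter (((n : ℚ) + 1) • Ec) (((n : ℚ) + 1) • Ec) / 2
          = (Wch.ch2 + S.inter Wch.c1 ((n : ℚ) • Ec)
              + Wch.r * S.inter ((n : ℚ) • Ec) ((n : ℚ) • Ec) / 2)
            + (d : ℚ) * (((-n - 1 : ℤ) : ℚ) + 1 / 2) := congrArg CharQ.ch2 h
      rw [hVr, hWr] at hc1 hch2
      have hWc1 : Wch.c1 = Vch.c1 + ((r : ℚ) - d) • Ec := by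
        linear_combination (norm := module) -hc1
      have hWE : S.inter Wch.c1 Ec = -((r : ℚ) - d) := by
        rw [hWc1]; simp [hVrestr, hE]
      simp only [map_smul, LinearMap.smul_apply, smul_eq_mul, hE, hVrestr, hWE,
        push_cast] at hch2
      have hWch2 : Wch.ch2 = Vch.ch2 - ((r : ℚ) - d) / 2 := by
        push_cast at hch2 ⊢; linarith
      exact key S Vch Wch r d hrQ Ec hE hVrestr hVr hWr _ rfl hWc1 hWch2
    · have hc1 : Wch.c1 + Wch.r • ((n : ℚ) • Ec)
          = (Vch.c1 + Vch.r • (((n : ℚ) - 1) • Ec)) + (d : ℚ) • Ec := congrArg CharQ.c1 h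
      have hch2 : Wch.ch2 + S.inter Wch.c1 ((n : ℚ) • Ec)
            + Wch.r * S.inter ((n : ℚ) • Ec) ((n : ℚ) • Ec) / 2
          = (Vch.ch2 + S.inter Vch.c1 (((n : ℚ) - 1) • Ec)
              + Vch.r * S.inter (((n : ℚ) - 1) • Ec) (((n : ℚ) - 1) • Ec) / 2)
            + (d : ℚ) * (((-n : ℤ) : ℚ) + 1 / 2) := congrArg CharQ.ch2 h
      rw [hVr, hWr] at hc1 hch2
      have hWc1 : Wch.c1 = Vch.c1 + ((d : ℚ) - r) • Ec := by
        linear_combination (norm := module) hc1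
      have hWE : S.inter Wch.c1 Ec = (r : ℚ) - d := by
        rw [hWc1]; simp [hVrestr, hE]
      simp only [map_smul, LinearMap.smul_apply, smul_eq_mul, hE, hVrestr, hWE,
        push_cast] at hch2
      have hWch2 : Wch.ch2 = Vch.ch2 - ((r : ℚ) - d) / 2 := by
        push_cast at hch2 ⊢; linarith
      exact key S Vch Wch r d hrQ Ec hE hVrestr hVr hWr _ (by ring) hWc1 hWch2
  refine ⟨hmain, ?_⟩
  rw [hmain]
  have h1 : (d * (r - d) : ℚ) / (2 * (r : ℚ) ^ 2) ≤ 1 / 8 := by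
    rw [div_le_div_iff₀ (by positivity) (by norm_num)]
    nlinarith [sq_nonneg ((r : ℚ) - 2 * d)]
  linarith
end

section
/- On the del Pezzo surface X_m (m ≤ 6, blowup of ℙ² at m general points), let v be a Chern character of positive rank with Δ(v) ≥ 1. Then v satisfies the Drézet–Le Potier condition: for every exceptional bundle E with r(E) < r(v) and μ(v) ≤ μ(E) ≤ μ(v) + K², one has χ(E, v) ≤ 0, and dually for the second DL inequality. Concretely, writing ν(v) − ν(E) = a(−K) + bD with D.(−K) = 0, one has −1 ≤ a ≤ 0, D² ≤ 0 by the Hodge index theorem, hence P(ν(v)−ν(E)) ≤ 1 ≤ Δ(E) + Δ(v), giving χ(E,v) ≤ 0. -/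
variable {V : Type*} [AddCommGroup V] [Module ℚ V]

namespace CharQ

/-- `P(ν) = χ(O_X) + ν.(ν − K_X)/2`. -/
def P (S : NumSurface V) (x : V) : ℚ := S.chiO + S.inter x (x - S.K) / 2

/-- The slope with respect to `−K_X`: `μ(G) = ν(G).(−K_X)`. -/
def mu (S : NumSurface V) (v : CharQ V) : ℚ := S.inter (nu v) (-S.K)

/-- The Euler pairing, via Riemann–Roch:
`χ(E, F) = r(E)r(F)(P(ν(F) − ν(E)) − Δ(E) − Δ(F))`. -/
def chiPair (S : NumSurface V) (v w : CharQ V) : ℚ :=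
  v.r * w.r * (P S (nu w - nu v) - Delta S v - Delta S w)

end CharQ


open CharQ in
lemma P_le_one_aux
    (S : NumSurface V)
    (hchiO : S.chiO = 1)
    (hK2 : 0 < S.inter S.K S.K)
    (hodge : ∀ D : V, S.inter D S.K = 0 → S.inter D D ≤ 0)
    (x : V) (h1 : 0 ≤ S.inter x S.K) (h2 : S.inter x S.K ≤ S.inter S.K S.K) :
    P S x ≤ 1 := by
  set k2 : ℚ := S.inter S.K S.K with hk2
  set a : ℚ := -(S.inter x S.K) / k2 with ha
  set D : V := x + a • S.K with hD
  have hDK : S.inter D S.K = 0 := by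
    simp only [hD, map_add, map_smul, LinearMap.add_apply, LinearMap.smul_apply,
      smul_eq_mul, ha]
    field_simp
    rw [← hk2]; ring
  have hD2 : S.inter D D ≤ 0 := hodge D hDK
  have hKD : S.inter S.K D = 0 := by rw [S.inter_symm]; exact hDK
  have hxK : S.inter x S.K = -a * k2 := by
    rw [ha]; field_simp
  have hKx : S.inter S.K x = -a * k2 := by rw [S.inter_symm]; exact hxK
  have ha0 : a ≤ 0 := by
    rw [ha]
    apply div_nonpos_of_nonpos_of_nonneg (by linarith) (le_of_lt hK2)
  have ha1 : -1 ≤ a := by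
    rw [ha, le_div_iff₀ hK2]
    linarith
  have hx : x = D - a • S.K := by rw [hD]; abel
  have hexp : S.inter x (x - S.K) = S.inter D D + a * (a + 1) * k2 := by
    rw [hx]
    simp only [map_sub, map_smul, LinearMap.sub_apply, LinearMap.smul_apply,
      smul_eq_mul, hDK, hKD, hk2]
    ring
  have haa : a * (a + 1) * k2 ≤ 0 :=
    mul_nonpos_of_nonpos_of_nonneg (mul_nonpos_of_nonpos_of_nonneg ha0 (by linarith)) (le_of_lt hK2)
  have : S.inter x (x - S.K) ≤ 0 := by rw [hexp]; linarith
  rw [P, hchiO]; linarith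

open CharQ in
/-- On a del Pezzo surface `X_m` (`m ≤ 6`, `χ(O) = 1`, `K² = 9 − m > 0`, the
Hodge index theorem holds for the ample class `−K`), let `v` be a Chern
character of positive rank with `Δ(v) ≥ 1`.  Then `v` satisfies the
Drézet–Le Potier condition: for every exceptional bundle `E` (which has
`Δ(E) ≥ 0`) with `r(E) < r(v)` and `μ(v) ≤ μ(E) ≤ μ(v) + K²`, one has
`χ(E, v) ≤ 0`; and dually, if `μ(v) − K² ≤ μ(E) ≤ μ(v)` then
`χ(v, E) ≤ 0`. -/
theorem dl_condition_of_discriminant_ge_one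
    (S : NumSurface V) (hchiO : S.chiO = 1)
    (hK2 : 0 < S.inter S.K S.K)
    (hodge : ∀ D : V, S.inter D S.K = 0 → S.inter D D ≤ 0)
    (v E : CharQ V) (hv : 0 < v.r) (hEr : 0 < E.r) (hrlt : E.r < v.r)
    (hΔE : 0 ≤ Delta S E) (hΔv : 1 ≤ Delta S v) :
    (mu S v ≤ mu S E → mu S E ≤ mu S v + S.inter S.K S.K →
      chiPair S E v ≤ 0) ∧
    (mu S v - S.inter S.K S.K ≤ mu S E → mu S E ≤ mu S v →
      chiPair S v E ≤ 0) := by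
  have hvE : S.inter (nu v - nu E) S.K = mu S E - mu S v := by
    simp only [mu, map_sub, map_neg, LinearMap.sub_apply, LinearMap.neg_apply]
    ring
  have hEv : S.inter (nu E - nu v) S.K = mu S v - mu S E := by
    simp only [mu, map_sub, map_neg, LinearMap.sub_apply, LinearMap.neg_apply]
    ring
  have hrr : 0 < E.r * v.r := mul_pos hEr hv
  constructor
  · intro hlo hhi
    have hP : P S (nu v - nu E) ≤ 1 := by
      apply P_le_one_aux S hchiO hK2 hodge
      · rw [hvE]; linarith
      · rw [hvE]; linarith
    have : P S (nu v - nu E) - Delta S E - Delta S v ≤ 0 := by linarith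
    exact mul_nonpos_of_nonneg_of_nonpos (le_of_lt hrr) this
  · intro hlo hhi
    have hP : P S (nu E - nu v) ≤ 1 := by
      apply P_le_one_aux S hchiO hK2 hodge
      · rw [hEv]; linarith
      · rw [hEv]; linarith
    have : P S (nu E - nu v) - Delta S v - Delta S E ≤ 0 := by linarith
    have hrr' : 0 ≤ v.r * E.r := le_of_lt (mul_pos hv hEr)
    exact mul_nonpos_of_nonneg_of_nonpos hrr' this
end
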